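/- Let S be a Γ-graded-Boolean inverse ∧-semigroup and let u, v_i ∈ E(S) (i ∈ I) be idempotents such that 𝒴_u = ⋃_{i∈I} 𝒴_{v_i}, where 𝒴_e denotes the set of ultrafilters on S containing e. Then there exists a finite subset J ⊆ I with 𝒴_u = ⋃_{i∈J} 𝒴_{v_i}. -/

import Mathlib

/-- An element is idempotent. -/
def IsIdemE {S : Type*} [Mul S] (e : S) : Prop := e * e = e

/-- `S` is an inverse semigroup with zero, `inv` giving the unique inverse of each element. -/
structure IsInvSemigroupZ (S : Type*) [Semigroup S] [Zero S] (inv : S → S) : Prop where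
  zero_mul : ∀ s : S, 0 * s = 0
  mul_zero : ∀ s : S, s * 0 = 0
  mul_inv_mul : ∀ s : S, s * inv s * s = s
  inv_mul_inv : ∀ s : S, inv s * s * inv s = inv s
  inv_unique : ∀ s t : S, s * t * s = s → t * s * t = t → t = inv s

/-- The natural partial order on an inverse semigroup: `s ≤ t` iff `s = t * u` for an idempotent `u`. -/
def natle {S : Type*} [Semigroup S] (s t : S) : Prop := ∃ u : S, IsIdemE u ∧ s = t * u

/-- A `Γ`-grading on `S` (the value of `deg` at `0` is irrelevant). -/
def IsGradingZ {S : Type*} [Semigroup S] [Zero S] {Γ : Type*} [Group Γ] (deg : S → Γ) : Prop :=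
  ∀ s t : S, s * t ≠ 0 → deg (s * t) = deg s * deg t

/-- Membership in the component `S_α = deg⁻¹(α) ∪ {0}`. -/
def memGradeZ {S : Type*} [Zero S] {Γ : Type*} (deg : S → Γ) (α : Γ) (s : S) : Prop :=
  s = 0 ∨ deg s = α

/-- `s` and `t` are compatible: `s⁻¹t` and `st⁻¹` are idempotent. -/
def CompatZ {S : Type*} [Semigroup S] (inv : S → S) (s t : S) : Prop :=
  IsIdemE (inv s * t) ∧ IsIdemE (s * inv t)

/-- `s` and `t` are orthogonal: `s⁻¹t = 0 = st⁻¹`. -/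
def OrthogZ {S : Type*} [Semigroup S] [Zero S] (inv : S → S) (s t : S) : Prop :=
  inv s * t = 0 ∧ s * inv t = 0

/-- `j` is the join (least upper bound) of `A` in the natural partial order. -/
def IsJoinZ {S : Type*} [Semigroup S] (A : Set S) (j : S) : Prop :=
  (∀ a ∈ A, natle a j) ∧ ∀ b : S, (∀ a ∈ A, natle a b) → natle j b

/-- `m` is the meet (greatest lower bound) of `A` in the natural partial order. -/
def IsMeetZ {S : Type*} [Semigroup S] (A : Set S) (m : S) : Prop :=
  (∀ a ∈ A, natle m a) ∧ ∀ b : S, (∀ a ∈ A, natle b a) → natle b m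

/-- A filter on `S` with respect to the natural partial order. -/
structure IsFilterZ {S : Type*} [Semigroup S] [Zero S] (X : Set S) : Prop where
  nonempty : X.Nonempty
  directed : ∀ x ∈ X, ∀ y ∈ X, ∃ z ∈ X, natle z x ∧ natle z y
  upward : ∀ x ∈ X, ∀ y : S, natle x y → y ∈ X
  zero_not_mem : (0 : S) ∉ X

/-- An ultrafilter on `S`: a maximal filter. -/
def IsUltraZ {S : Type*} [Semigroup S] [Zero S] (X : Set S) : Prop :=
  IsFilterZ X ∧ ∀ Y : Set S, IsFilterZ Y → X ⊆ Y → Y = X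

/-- The upward closure of a subset. -/
def upsetZ {S : Type*} [Semigroup S] (Y : Set S) : Set S := {x : S | ∃ y ∈ Y, natle y x}

/-- The set of ultrafilters on `S` containing `s`. -/
def USetZ {S : Type*} [Semigroup S] [Zero S] (s : S) : Set (Set S) :=
  {X : Set S | IsUltraZ X ∧ s ∈ X}

/-- `S` is a `Γ`-graded-Boolean inverse ∧-semigroup, with meet operation `meet`. -/
structure IsGradedBooleanZ {S : Type*} [Semigroup S] [Zero S] {Γ : Type*} [Group Γ]
    (inv : S → S) (deg : S → Γ) (meet : S → S → S) : Prop where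
  invSemi : IsInvSemigroupZ S inv
  grading : IsGradingZ deg
  meet_is : ∀ s t : S, IsMeetZ {s, t} (meet s t)
  joins : ∀ (α : Γ) (A : Finset S), A.Nonempty →
    (∀ a ∈ A, memGradeZ deg α a) → (∀ a ∈ A, ∀ b ∈ A, CompatZ inv a b) →
    ∃ j : S, IsJoinZ (↑A) j
  mul_join_left : ∀ (α : Γ) (A : Finset S), A.Nonempty →
    (∀ a ∈ A, memGradeZ deg α a) → (∀ a ∈ A, ∀ b ∈ A, CompatZ inv a b) →
    ∀ s j : S, IsJoinZ (↑A) j → IsJoinZ ((fun a => s * a) '' ↑A) (s * j)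
  mul_join_right : ∀ (α : Γ) (A : Finset S), A.Nonempty →
    (∀ a ∈ A, memGradeZ deg α a) → (∀ a ∈ A, ∀ b ∈ A, CompatZ inv a b) →
    ∀ s j : S, IsJoinZ (↑A) j → IsJoinZ ((fun a => a * s) '' ↑A) (j * s)
  idem_joins : ∀ e f : S, IsIdemE e → IsIdemE f → ∃ j : S, IsIdemE j ∧ IsJoinZ {e, f} j
  distrib : ∀ e f g j : S, IsIdemE e → IsIdemE f → IsIdemE g →
    IsJoinZ {f, g} j → IsJoinZ {e * f, e * g} (e * j)
  complemented : ∀ e f : S, IsIdemE e → IsIdemE f → natle f e →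
    ∃ g : S, IsIdemE g ∧ natle g e ∧ f * g = 0 ∧ IsJoinZ {f, g} e

set_option linter.unusedSectionVars false
section Aux

variable {S : Type*} [Semigroup S] [Zero S] {inv : S → S}

/-- an idempotent is its own inverse -/
theorem auxInvIdem (hS : IsInvSemigroupZ S inv) {e : S} (he : IsIdemE e) : inv e = e :=
  (hS.inv_unique e e (by rw [he, he]) (by rw [he, he])).symm

/-- product of idempotents is idempotent -/
theorem auxIdemMul (hS : IsInvSemigroupZ S inv) {e f : S} (he : IsIdemE e) (hf : IsIdemE f) :
    IsIdemE (e * f) := by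
  set x := inv (e * f) with hx
  have h1 : e * f * x * (e * f) = e * f := hS.mul_inv_mul (e * f)
  have h2 : x * (e * f) * x = x := hS.inv_mul_inv (e * f)
  have he' : ∀ y : S, e * (e * y) = e * y := fun y => by rw [← mul_assoc, he]
  have hf' : ∀ y : S, f * (f * y) = f * y := fun y => by rw [← mul_assoc, hf]
  have h1n : e * (f * (x * (e * f))) = e * f := by
    have := h1; simp only [mul_assoc] at this; exact this
  have h2n : x * (e * (f * x)) = x := by
    have := h2; simp only [mul_assoc] at this; exact this
  have h2n' : ∀ y : S, x * (e * (f * (x * y))) = x * y := fun y => by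
    have := congrArg (· * y) h2; simp only [mul_assoc] at this; exact this
  have hxe : x * e = x := by
    have hinv1 : (e * f) * (x * e) * (e * f) = e * f := by
      simp only [mul_assoc]; rw [he' f]; exact h1n
    have hinv2 : (x * e) * (e * f) * (x * e) = x * e := by
      simp only [mul_assoc]; rw [he' (f * (x * e))]; exact h2n' e
    have h := hS.inv_unique (e * f) (x * e) hinv1 hinv2
    rw [← hx] at h; exact h
  have hfx : f * x = x := by
    have hinv1 : (e * f) * (f * x) * (e * f) = e * f := by
      simp only [mul_assoc]; rw [hf' (x * (e * f))]; exact h1n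
    have hinv2 : (f * x) * (e * f) * (f * x) = f * x := by
      simp only [mul_assoc]; rw [hf' x, h2n]
    have h := hS.inv_unique (e * f) (f * x) hinv1 hinv2
    rw [← hx] at h; exact h
  have hxidem : IsIdemE x := by
    show x * x = x
    calc x * x = (x * e) * (f * x) := by rw [hxe, hfx]
    _ = x * (e * (f * x)) := by simp only [mul_assoc]
    _ = x := h2n
  have hef : e * f = inv x := hS.inv_unique x (e * f) h2 h1
  show (e * f) * (e * f) = e * f
  rw [hef, auxInvIdem hS hxidem]; exact hxidem

/-- idempotents commute -/
theorem auxIdemComm (hS : IsInvSemigroupZ S inv) {e f : S} (he : IsIdemE e) (hf : IsIdemE f) :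
    e * f = f * e := by
  have hef := auxIdemMul hS he hf
  have hfe := auxIdemMul hS hf he
  have he' : ∀ y : S, e * (e * y) = e * y := fun y => by rw [← mul_assoc, he]
  have hf' : ∀ y : S, f * (f * y) = f * y := fun y => by rw [← mul_assoc, hf]
  have hefn : e * (f * (e * f)) = e * f := by
    have h : e * f * (e * f) = e * f := hef
    simp only [mul_assoc] at h; exact h
  have hfen : f * (e * (f * e)) = f * e := by
    have h : f * e * (f * e) = f * e := hfe
    simp only [mul_assoc] at h; exact h
  have h1 : (e * f) * (f * e) * (e * f) = e * f := by
    simp only [mul_assoc]; rw [hf' (e * (e * f)), he' f]; exact hefn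
  have h2 : (f * e) * (e * f) * (f * e) = f * e := by
    simp only [mul_assoc]; rw [he' (f * (f * e)), hf' e]; exact hfen
  have h := hS.inv_unique (e * f) (f * e) h1 h2
  rw [auxInvIdem hS hef] at h
  exact h.symm

theorem auxNatleRefl (hS : IsInvSemigroupZ S inv) (s : S) : natle s s := by
  refine ⟨inv s * s, ?_, ?_⟩
  · show inv s * s * (inv s * s) = inv s * s
    rw [show inv s * s * (inv s * s) = inv s * (s * inv s * s) by simp only [mul_assoc],
      hS.mul_inv_mul]
  · rw [← mul_assoc, hS.mul_inv_mul]

theorem auxNatleTrans (hS : IsInvSemigroupZ S inv) {a b c : S}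
    (h1 : natle a b) (h2 : natle b c) : natle a c := by
  obtain ⟨u, hu, rfl⟩ := h1
  obtain ⟨w, hw, rfl⟩ := h2
  exact ⟨w * u, auxIdemMul hS hw hu, by rw [mul_assoc]⟩

theorem auxIdemZero (hS : IsInvSemigroupZ S inv) : IsIdemE (0 : S) := by
  show (0 : S) * 0 = 0; exact hS.mul_zero 0

theorem auxNatleZero (hS : IsInvSemigroupZ S inv) (s : S) : natle (0 : S) s :=
  ⟨0, auxIdemZero hS, (hS.mul_zero s).symm⟩

theorem auxEqZeroOfLe (hS : IsInvSemigroupZ S inv) {s : S} (h : natle s (0 : S)) : s = 0 := by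
  obtain ⟨u, _, rfl⟩ := h; exact hS.zero_mul u

theorem auxNatleMulLeft {a b : S} (c : S) (h : natle a b) : natle (c * a) (c * b) := by
  obtain ⟨u, hu, rfl⟩ := h; exact ⟨u, hu, by rw [mul_assoc]⟩

theorem auxNatleMulRight {s h : S} (hh : IsIdemE h) : natle (s * h) s := ⟨h, hh, rfl⟩

/-- absorption: if z ≤ a with a idempotent then a*z = z -/
theorem auxAbsorb {a z : S} (ha : IsIdemE a) (h : natle z a) : a * z = z := by
  obtain ⟨u, _, rfl⟩ := h
  rw [← mul_assoc, ha]

theorem auxIdemOfLe (hS : IsInvSemigroupZ S inv) {a z : S} (ha : IsIdemE a) (h : natle z a) :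
    IsIdemE z := by
  obtain ⟨u, hu, rfl⟩ := h
  exact auxIdemMul hS ha hu

theorem auxLeMul (hS : IsInvSemigroupZ S inv) {a b z : S} (ha : IsIdemE a) (hb : IsIdemE b)
    (h1 : natle z a) (h2 : natle z b) : natle z (a * b) := by
  have hz : IsIdemE z := auxIdemOfLe hS ha h1
  refine ⟨z, hz, ?_⟩
  rw [mul_assoc, auxAbsorb hb h2, auxAbsorb ha h1]

theorem auxIdemLe (hS : IsInvSemigroupZ S inv) {e f : S} (he : IsIdemE e) (hf : IsIdemE f)
    (h : natle e f) : e = e * f := by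
  rw [auxIdemComm hS he hf]
  exact (auxAbsorb hf h).symm

end Aux
section Aux2

variable {S : Type*} [Semigroup S] [Zero S] {Γ : Type*} [Group Γ]
  {inv : S → S} {deg : S → Γ} {meet : S → S → S}

theorem auxGradeOne (hG : IsGradingZ deg) {e : S} (he : IsIdemE e) : memGradeZ deg 1 e := by
  by_cases h : e = 0
  · exact Or.inl h
  · refine Or.inr ?_
    have := hG e e (by rw [he]; exact h)
    rw [he] at this
    have h2 : deg e * 1 = deg e * deg e := by rw [mul_one, ← this]
    exact (mul_left_cancel h2).symm

theorem auxCompatIdem (hS : IsInvSemigroupZ S inv) {e f : S} (he : IsIdemE e) (hf : IsIdemE f) :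
    CompatZ inv e f := by
  constructor
  · rw [auxInvIdem hS he]; exact auxIdemMul hS he hf
  · rw [auxInvIdem hS hf]; exact auxIdemMul hS he hf

/-- Every filter extends to an ultrafilter. -/
theorem auxUltraExt (F : Set S) (hF : IsFilterZ F) :
    ∃ X : Set S, IsUltraZ X ∧ F ⊆ X := by
  have hzorn : ∀ c ⊆ {Y : Set S | IsFilterZ Y ∧ F ⊆ Y}, IsChain (· ⊆ ·) c → c.Nonempty →
      ∃ ub ∈ {Y : Set S | IsFilterZ Y ∧ F ⊆ Y}, ∀ s ∈ c, s ⊆ ub := by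
    intro c hc hchain hcne
    obtain ⟨Y0, hY0⟩ := hcne
    refine ⟨⋃₀ c, ⟨⟨?_, ?_, ?_, ?_⟩, ?_⟩, fun s hs => Set.subset_sUnion_of_mem hs⟩
    · obtain ⟨x, hx⟩ := (hc hY0).1.nonempty
      exact ⟨x, Y0, hY0, hx⟩
    · rintro x ⟨Y1, hY1, hx⟩ y ⟨Y2, hY2, hy⟩
      rcases hchain.total hY1 hY2 with h12 | h21
      · obtain ⟨z, hz, hzx, hzy⟩ := (hc hY2).1.directed x (h12 hx) y hy
        exact ⟨z, ⟨Y2, hY2, hz⟩, hzx, hzy⟩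
      · obtain ⟨z, hz, hzx, hzy⟩ := (hc hY1).1.directed x hx y (h21 hy)
        exact ⟨z, ⟨Y1, hY1, hz⟩, hzx, hzy⟩
    · rintro x ⟨Y1, hY1, hx⟩ y hxy
      exact ⟨Y1, hY1, (hc hY1).1.upward x hx y hxy⟩
    · rintro ⟨Y1, hY1, h0⟩
      exact (hc hY1).1.zero_not_mem h0
    · exact (hc hY0).2.trans (Set.subset_sUnion_of_mem hY0)
  obtain ⟨m, hFm, hm⟩ := zorn_subset_nonempty _ hzorn F ⟨hF, subset_rfl⟩
  refine ⟨m, ⟨hm.prop.1, ?_⟩, hm.prop.2⟩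
  intro Y hY hmY
  exact hm.eq_of_ge ⟨hY, hFm.trans hmY⟩ hmY

theorem auxMeetLe (hM : ∀ s t : S, IsMeetZ {s, t} (meet s t)) (s t : S) :
    natle (meet s t) s ∧ natle (meet s t) t :=
  ⟨(hM s t).1 s (Set.mem_insert _ _), (hM s t).1 t (Set.mem_insert_of_mem _ rfl)⟩

theorem auxLeMeet (hM : ∀ s t : S, IsMeetZ {s, t} (meet s t)) {s t z : S}
    (h1 : natle z s) (h2 : natle z t) : natle z (meet s t) := by
  refine (hM s t).2 z ?_
  rintro a (rfl | rfl)
  · exact h1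
  · exact h2

/-- If every member of an ultrafilter meets `e` nontrivially, then `e` belongs to it. -/
theorem auxUltraMem (hS : IsInvSemigroupZ S inv) (hM : ∀ s t : S, IsMeetZ {s, t} (meet s t))
    {X : Set S} (hX : IsUltraZ X) {e : S} (h : ∀ x ∈ X, meet x e ≠ 0) : e ∈ X := by
  set X' : Set S := {w : S | ∃ x ∈ X, natle (meet x e) w} with hX'
  have hXsub : X ⊆ X' := fun x hx => ⟨x, hx, (auxMeetLe hM x e).1⟩
  have hfil : IsFilterZ X' := by
    refine ⟨?_, ?_, ?_, ?_⟩
    · obtain ⟨x, hx⟩ := hX.1.nonempty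
      exact ⟨x, hXsub hx⟩
    · rintro a ⟨x, hx, hax⟩ b ⟨y, hy, hby⟩
      obtain ⟨z, hz, hzx, hzy⟩ := hX.1.directed x hx y hy
      have h1 : natle (meet z e) (meet x e) :=
        auxLeMeet hM (auxNatleTrans hS (auxMeetLe hM z e).1 hzx) (auxMeetLe hM z e).2
      have h2 : natle (meet z e) (meet y e) :=
        auxLeMeet hM (auxNatleTrans hS (auxMeetLe hM z e).1 hzy) (auxMeetLe hM z e).2
      exact ⟨meet z e, ⟨z, hz, auxNatleRefl hS _⟩,
        auxNatleTrans hS h1 hax, auxNatleTrans hS h2 hby⟩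
    · rintro a ⟨x, hx, hax⟩ b hab
      exact ⟨x, hx, auxNatleTrans hS hax hab⟩
    · rintro ⟨x, hx, hx0⟩
      exact h x hx (auxEqZeroOfLe hS hx0)
  have := hX.2 X' hfil hXsub
  rw [← this]
  obtain ⟨x, hx⟩ := hX.1.nonempty
  exact ⟨x, hx, (auxMeetLe hM x e).2⟩

end Aux2
section Aux3

variable {S : Type*} [Semigroup S] [Zero S] {Γ : Type*} [Group Γ]
  {inv : S → S} {deg : S → Γ} {meet : S → S → S}

/-- Ultrafilters are prime on idempotent joins. -/
theorem auxPrime (hB : IsGradedBooleanZ inv deg meet) {X : Set S} (hX : IsUltraZ X)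
    {e f g : S} (he : IsIdemE e) (hf : IsIdemE f) (hg : IsIdemE g)
    (hj : IsJoinZ {f, g} e) (heX : e ∈ X) : f ∈ X ∨ g ∈ X := by
  classical
  have hS := hB.invSemi
  have hM := hB.meet_is
  by_contra hcon
  push_neg at hcon
  obtain ⟨hfX, hgX⟩ := hcon
  have hx : ∃ x ∈ X, meet x f = 0 := by
    by_contra hx
    push_neg at hx
    exact hfX (auxUltraMem hS hM hX hx)
  have hy : ∃ y ∈ X, meet y g = 0 := by
    by_contra hy
    push_neg at hy
    exact hgX (auxUltraMem hS hM hX hy)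
  obtain ⟨x, hxX, hxf⟩ := hx
  obtain ⟨y, hyX, hyg⟩ := hy
  obtain ⟨z1, hz1X, hz1x, hz1y⟩ := hX.1.directed x hxX y hyX
  obtain ⟨z, hzX, hzz1, hze⟩ := hX.1.directed z1 hz1X e heX
  obtain ⟨h, hhid, hzeq⟩ := hze
  -- multiply the join {f, g} = e on the right by h
  set A : Finset S := {f, g} with hA
  have hAcoe : (↑A : Set S) = {f, g} := by simp [hA]
  have hAne : A.Nonempty := ⟨f, by simp [hA]⟩
  have hgrade : ∀ a ∈ A, memGradeZ deg (1 : Γ) a := by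
    intro a ha
    rcases Finset.mem_insert.mp ha with rfl | ha
    · exact auxGradeOne hB.grading hf
    · rw [Finset.mem_singleton.mp ha]; exact auxGradeOne hB.grading hg
  have hcompat : ∀ a ∈ A, ∀ b ∈ A, CompatZ inv a b := by
    intro a ha b hb
    have hia : IsIdemE a := by
      rcases Finset.mem_insert.mp ha with rfl | ha
      · exact hf
      · rw [Finset.mem_singleton.mp ha]; exact hg
    have hib : IsIdemE b := by
      rcases Finset.mem_insert.mp hb with rfl | hb
      · exact hf
      · rw [Finset.mem_singleton.mp hb]; exact hg
    exact auxCompatIdem hS hia hib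
  have hjoin := hB.mul_join_right (1 : Γ) A hAne hgrade hcompat h e (by rw [hAcoe]; exact hj)
  -- f * h = 0
  have hfh : f * h = 0 := by
    obtain ⟨w, hwid, hfw⟩ := hj.1 f (Set.mem_insert _ _)
    have h1 : natle (f * h) z := by
      refine ⟨w, hwid, ?_⟩
      rw [hzeq, hfw]
      rw [mul_assoc, mul_assoc, auxIdemComm hS hhid hwid]
    have h2 : natle (f * h) x :=
      auxNatleTrans hS (auxNatleTrans hS h1 hzz1) hz1x
    have h3 : natle (f * h) f := auxNatleMulRight hhid
    have := auxLeMeet hM h2 h3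
    rw [hxf] at this
    exact auxEqZeroOfLe hS this
  have hgh : g * h = 0 := by
    obtain ⟨w, hwid, hgw⟩ := hj.1 g (Set.mem_insert_of_mem _ rfl)
    have h1 : natle (g * h) z := by
      refine ⟨w, hwid, ?_⟩
      rw [hzeq, hgw]
      rw [mul_assoc, mul_assoc, auxIdemComm hS hhid hwid]
    have h2 : natle (g * h) y :=
      auxNatleTrans hS (auxNatleTrans hS h1 hzz1) hz1y
    have h3 : natle (g * h) g := auxNatleMulRight hhid
    have := auxLeMeet hM h2 h3
    rw [hyg] at this
    exact auxEqZeroOfLe hS this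
  have hz0 : natle (e * h) 0 := by
    refine hjoin.2 0 ?_
    rintro a ⟨b, hb, rfl⟩
    rw [hAcoe] at hb
    rcases hb with rfl | hb
    · show natle (b * h) 0
      rw [hfh]; exact auxNatleZero hS 0
    · show natle (b * h) 0
      rw [Set.mem_singleton_iff.mp hb, hgh]; exact auxNatleZero hS 0
  have : z = 0 := by rw [hzeq]; exact auxEqZeroOfLe hS hz0
  rw [this] at hzX
  exact hX.1.zero_not_mem hzX

end Aux3

theorem uset_idempotent_compactness
    {S Γ : Type*} [Semigroup S] [Zero S] [Group Γ]
    (inv : S → S) (deg : S → Γ) (meet : S → S → S)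
    (hB : IsGradedBooleanZ inv deg meet)
    {I : Type*} (u : S) (v : I → S)
    (hu : IsIdemE u) (hv : ∀ i : I, IsIdemE (v i))
    (h : USetZ u = ⋃ i : I, USetZ (v i)) :
    ∃ J : Finset I, USetZ u = ⋃ i ∈ J, USetZ (v i) := by
  classical
  have hS := hB.invSemi
  -- relative complements of u * v i inside u
  have hcomp : ∀ i : I, ∃ c : S, IsIdemE c ∧ natle c u ∧ (u * v i) * c = 0 ∧
      IsJoinZ {u * v i, c} u :=
    fun i => hB.complemented u (u * v i) hu (auxIdemMul hS hu (hv i)) ⟨v i, hv i, rfl⟩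
  choose c hcid hcle hcorth hcjoin using hcomp
  have hcvi : ∀ i, c i * v i = 0 := by
    intro i
    have h1 : c i = c i * u := auxIdemLe hS (hcid i) hu (hcle i)
    calc c i * v i = c i * (u * v i) := by rw [← mul_assoc, ← h1]
    _ = (u * v i) * c i := auxIdemComm hS (hcid i) (auxIdemMul hS hu (hv i))
    _ = 0 := hcorth i
  set P : List I → S := fun l => l.foldr (fun i a => c i * a) u with hPdef
  have hfold : ∀ (l : List I) (s : S), IsIdemE s →
      IsIdemE (l.foldr (fun i a => c i * a) s) ∧ natle (l.foldr (fun i a => c i * a) s) s := by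
    intro l
    induction l with
    | nil => exact fun s hs => ⟨hs, auxNatleRefl hS s⟩
    | cons i l ih =>
      intro s hs
      obtain ⟨h1, h2⟩ := ih s hs
      refine ⟨auxIdemMul hS (hcid i) h1, auxNatleTrans hS ?_ h2⟩
      refine ⟨c i, hcid i, ?_⟩
      exact auxIdemComm hS (hcid i) h1
  have hPidem : ∀ l, IsIdemE (P l) := fun l => (hfold l u hu).1
  have hPleu : ∀ l, natle (P l) u := fun l => (hfold l u hu).2
  have hfold_mono : ∀ (l : List I) (s t : S), natle s t →
      natle (l.foldr (fun i a => c i * a) s) (l.foldr (fun i a => c i * a) t) := by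
    intro l
    induction l with
    | nil => exact fun s t hst => hst
    | cons i l ih => exact fun s t hst => auxNatleMulLeft (c i) (ih s t hst)
  have hPapp1 : ∀ l1 l2 : List I, natle (P (l1 ++ l2)) (P l1) := by
    intro l1 l2
    show natle ((l1 ++ l2).foldr _ u) _
    rw [List.foldr_append]
    exact hfold_mono l1 _ u (hPleu l2)
  have hPapp2 : ∀ l1 l2 : List I, natle (P (l1 ++ l2)) (P l2) := by
    intro l1 l2
    show natle ((l1 ++ l2).foldr _ u) _
    rw [List.foldr_append]
    exact (hfold l1 (P l2) (hPidem l2)).2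
  have hUsub : ∀ i : I, USetZ (v i) ⊆ USetZ u := by
    intro i X hX
    rw [h]
    exact Set.mem_iUnion.mpr ⟨i, hX⟩
  by_cases hcase : ∃ l : List I, P l = 0
  · -- a finite product of complements vanishes: l.toFinset is a subcover
    obtain ⟨l, hl0⟩ := hcase
    refine ⟨l.toFinset, ?_⟩
    apply Set.Subset.antisymm
    · rintro X ⟨hXu, huX⟩
      have hex : ∃ i ∈ l, v i ∈ X := by
        by_contra hno
        push_neg at hno
        have hcX : ∀ i ∈ l, c i ∈ X := by
          intro i hi
          rcases auxPrime hB hXu hu (auxIdemMul hS hu (hv i)) (hcid i) (hcjoin i) huX with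
            hmem | hmem
          · exfalso
            refine hno i hi (hXu.1.upward _ hmem (v i) ?_)
            exact ⟨u, hu, auxIdemComm hS hu (hv i)⟩
          · exact hmem
        have hPX : ∀ l' : List I, (∀ i ∈ l', c i ∈ X) → P l' ∈ X := by
          intro l'
          induction l' with
          | nil => exact fun _ => huX
          | cons i l' ih =>
            intro hall
            have hciX : c i ∈ X := hall i List.mem_cons_self
            have hPl'X : P l' ∈ X := ih fun j hj => hall j (List.mem_cons_of_mem i hj)
            obtain ⟨z, hzX, hz1, hz2⟩ := hXu.1.directed (c i) hciX (P l') hPl'X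
            refine hXu.1.upward z hzX (c i * P l') ?_
            exact auxLeMul hS (hcid i) (hPidem l') hz1 hz2
        have := hPX l hcX
        rw [hl0] at this
        exact hXu.1.zero_not_mem this
      obtain ⟨i, hi, hviX⟩ := hex
      exact Set.mem_biUnion (List.mem_toFinset.mpr hi) ⟨hXu, hviX⟩
    · rintro X hX
      obtain ⟨i, -, hXi⟩ := Set.mem_iUnion₂.mp hX
      exact hUsub i hXi
  · -- no finite product vanishes: build an ultrafilter avoiding every v i
    exfalso
    push_neg at hcase
    set F : Set S := {w : S | ∃ l : List I, natle (P l) w} with hF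
    have hFfil : IsFilterZ F := by
      refine ⟨⟨u, ⟨[], auxNatleRefl hS u⟩⟩, ?_, ?_, ?_⟩
      · rintro a ⟨l1, ha⟩ b ⟨l2, hb⟩
        refine ⟨P (l1 ++ l2), ⟨l1 ++ l2, auxNatleRefl hS _⟩, ?_, ?_⟩
        · exact auxNatleTrans hS (hPapp1 l1 l2) ha
        · exact auxNatleTrans hS (hPapp2 l1 l2) hb
      · rintro a ⟨l1, ha⟩ b hab
        exact ⟨l1, auxNatleTrans hS ha hab⟩
      · rintro ⟨l1, h0⟩
        exact hcase l1 (auxEqZeroOfLe hS h0)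
    obtain ⟨X, hXu, hFX⟩ := auxUltraExt F hFfil
    have huX : u ∈ X := hFX ⟨[], auxNatleRefl hS u⟩
    have hXmem : X ∈ USetZ u := ⟨hXu, huX⟩
    rw [h] at hXmem
    obtain ⟨i, hXi⟩ := Set.mem_iUnion.mp hXmem
    have hviX : v i ∈ X := hXi.2
    have hciX : c i ∈ X := hFX ⟨[i], ⟨u, hu, rfl⟩⟩
    obtain ⟨z, hzX, hz1, hz2⟩ := hXu.1.directed (c i) hciX (v i) hviX
    have hz0 : z = 0 := by
      calc z = c i * z := (auxAbsorb (hcid i) hz1).symm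
      _ = c i * (v i * z) := by rw [auxAbsorb (hv i) hz2]
      _ = (c i * v i) * z := by rw [mul_assoc]
      _ = 0 := by rw [hcvi i, hS.zero_mul]
    rw [hz0] at hzX
    exact hXu.1.zero_not_mem hzX
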